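/- Let p(x) = Σ_{j=1}^d c_j e^{2πi y_j x} be a trigonometric polynomial with d ≥ 2, real frequencies y_1 < ⋯ < y_d and all c_j ≠ 0, and let P(z) = Σ_{j=1}^d c_j e^{2πi y_j z} be its entire extension to ℂ. If P has a non-real zero z₀, then there exist ε > 0, a real number L > 0, and for every interval of length L a real number s in it such that P has a zero in the disc of radius ε centered at z₀ + s. In particular, the set of real translates s for which P vanishes somewhere in B(z₀ + s, ε) is syndetic in ℝ. -/

import Mathlib

open Complex

lemma norm_exp_im (a : ℝ) : ‖Complex.exp ((a : ℂ) * Complex.I)‖ = 1 := by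
  rw [Complex.norm_exp_ofReal_mul_I]

lemma exp_form (y s : ℝ) :
    (2 * Real.pi * Complex.I * (y : ℂ) * (s : ℂ)) = ((2 * Real.pi * y * s : ℝ) : ℂ) * Complex.I := by
  push_cast; ring

lemma bohr (d : ℕ) (y : Fin d → ℝ) {δ : ℝ} (hδ : 0 < δ) :
    ∃ L > (0:ℝ), ∀ t : ℝ, ∃ s ∈ Set.Icc t (t + L),
      ∀ j, ‖Complex.exp (2 * Real.pi * Complex.I * (y j) * (s : ℂ)) - 1‖ < δ := by
  set ψ : ℝ → (Fin d → ℂ) := fun t j => Complex.exp (2 * Real.pi * Complex.I * (y j) * (t : ℂ))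
    with hψdef
  have hψn : ∀ t j, ‖ψ t j‖ = 1 := by
    intro t j
    show ‖Complex.exp _‖ = 1
    rw [exp_form, norm_exp_im]
  have hbdd : Bornology.IsBounded (Set.range ψ) := by
    apply Bornology.IsBounded.subset (Metric.isBounded_closedBall (x := (0 : Fin d → ℂ)) (r := 1))
    rintro _ ⟨t, rfl⟩
    rw [Metric.mem_closedBall, dist_zero_right]
    exact pi_norm_le_iff_of_nonneg zero_le_one |>.2 fun j => (hψn t j).le
  have hK : IsCompact (closure (Set.range ψ)) :=
    Metric.isCompact_of_isClosed_isBounded isClosed_closure hbdd.closure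
  have hcover : closure (Set.range ψ) ⊆ ⋃ s : ℝ, Metric.ball (ψ s) δ := by
    intro k hk
    obtain ⟨a, ⟨t, rfl⟩, ha⟩ := Metric.mem_closure_iff.1 hk δ hδ
    exact Set.mem_iUnion.2 ⟨t, by simpa [dist_comm] using ha⟩
  obtain ⟨T, hT⟩ := hK.elim_finite_subcover _ (fun s => Metric.isOpen_ball) hcover
  have hTne : T.Nonempty := by
    rcases Finset.eq_empty_or_nonempty T with rfl | h
    · exfalso
      have := hT (subset_closure ⟨0, rfl⟩)
      simpa using this
    · exact h
  set M : ℝ := T.sup' hTne (fun s => |s|) with hM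
  have hM0 : 0 ≤ M := le_trans (abs_nonneg _) (Finset.le_sup' _ hTne.choose_spec)
  refine ⟨2 * M + 2, by linarith, fun t => ?_⟩
  have hmem : ψ (t + M + 1) ∈ closure (Set.range ψ) := subset_closure ⟨t + M + 1, rfl⟩
  obtain ⟨s₀, hs₀T, hs₀⟩ := by
    have := hT hmem
    simpa using this
  have hs₀M : |s₀| ≤ M := Finset.le_sup' _ hs₀T
  refine ⟨t + M + 1 - s₀, ?_, ?_⟩
  · constructor
    · have := abs_le.1 hs₀M
      linarith [this.2]
    · have := abs_le.1 hs₀M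
      linarith [this.1]
  · intro j
    have hdj : dist (ψ (t + M + 1) j) (ψ s₀ j) < δ :=
      lt_of_le_of_lt (dist_le_pi_dist _ _ j) hs₀
    have key : Complex.exp (2 * Real.pi * Complex.I * (y j) * ((t + M + 1 - s₀ : ℝ) : ℂ)) - 1
        = (ψ (t + M + 1) j - ψ s₀ j) * Complex.exp (-(2 * Real.pi * Complex.I * (y j) * (s₀ : ℂ))) := by
      simp only [hψdef]
      rw [sub_mul, ← Complex.exp_add, ← Complex.exp_add]
      push_cast
      ring_nf
      rw [Complex.exp_zero]
      ring
    rw [key, norm_mul]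
    have : ‖Complex.exp (-(2 * Real.pi * Complex.I * (y j) * (s₀ : ℂ)))‖ = 1 := by
      have : -(2 * Real.pi * Complex.I * (y j) * (s₀ : ℂ))
          = ((2 * Real.pi * (y j) * (-s₀) : ℝ) : ℂ) * Complex.I := by push_cast; ring
      rw [this, norm_exp_im]
    rw [this, mul_one]
    simpa [dist_eq_norm] using hdj

lemma Pnontriv (d : ℕ) (hd : 2 ≤ d) (y : Fin d → ℝ) (hy : StrictMono y)
    (c : Fin d → ℂ) (hc : ∀ j, c j ≠ 0) :
    ∃ w : ℂ, (∑ j, c j * Complex.exp (2 * Real.pi * Complex.I * (y j) * w)) ≠ 0 := by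
  have hdpos : 0 < d := by omega
  set jm : Fin d := ⟨d - 1, by omega⟩ with hjm
  have hle : ∀ j : Fin d, j ≠ jm → y j < y jm := by
    intro j hj
    apply hy
    have : (j : ℕ) < d := j.2
    have hne : (j : ℕ) ≠ d - 1 := fun h => hj (Fin.ext h)
    show (j : ℕ) < d - 1
    omega
  set G : ℝ → ℂ := fun T => ∑ j, c j * Complex.exp ((2 * Real.pi * (y j - y jm) * T : ℝ) : ℂ)
    with hG
  have hGlim : Filter.Tendsto G Filter.atTop (nhds (c jm)) := by
    have hsum : (c jm) = ∑ j, if j = jm then c jm else 0 := by simp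
    rw [hsum]
    apply tendsto_finset_sum
    intro j _
    by_cases hj : j = jm
    · subst hj
      simp only [if_pos rfl, sub_self, mul_zero, zero_mul]
      simpa using tendsto_const_nhds (x := c j) (f := Filter.atTop (α := ℝ))
    · simp only [if_neg hj]
      have hneg : 2 * Real.pi * (y j - y jm) < 0 := by
        have := hle j hj
        have := Real.pi_pos
        nlinarith
      have h1 : Filter.Tendsto (fun T : ℝ => Real.exp (2 * Real.pi * (y j - y jm) * T))
          Filter.atTop (nhds 0) :=
        Real.tendsto_exp_atBot.comp
          ((Filter.tendsto_const_mul_atBot_of_neg hneg).2 Filter.tendsto_id)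
      have h2 : Filter.Tendsto (fun T : ℝ => ((Real.exp (2 * Real.pi * (y j - y jm) * T) : ℝ) : ℂ))
          Filter.atTop (nhds ((0:ℝ):ℂ)) := (Complex.continuous_ofReal.tendsto _).comp h1
      have heq : (fun T : ℝ => c j * Complex.exp ((2 * Real.pi * (y j - y jm) * T : ℝ) : ℂ))
          = fun T => c j * ((Real.exp (2 * Real.pi * (y j - y jm) * T) : ℝ) : ℂ) := by
        funext T
        rw [Complex.ofReal_exp]
      rw [heq]
      simpa using h2.const_mul (c j)
  have hev : ∃ T : ℝ, G T ≠ 0 := by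
    have := hGlim.eventually_ne (hc jm)
    exact (this.exists)
  obtain ⟨T, hT⟩ := hev
  refine ⟨-(Complex.I * T), fun h => hT ?_⟩
  have key : (∑ j, c j * Complex.exp (2 * Real.pi * Complex.I * (y j) * (-(Complex.I * T))))
      = Complex.exp ((2 * Real.pi * (y jm) * T : ℝ) : ℂ) * G T := by
    rw [hG, Finset.mul_sum]
    apply Finset.sum_congr rfl
    intro j _
    have hh : Complex.exp ((2 * Real.pi * (y jm) * T : ℝ) : ℂ)
        * Complex.exp ((2 * Real.pi * (y j - y jm) * T : ℝ) : ℂ)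
        = Complex.exp (2 * Real.pi * Complex.I * (y j) * (-(Complex.I * T))) := by
      rw [← Complex.exp_add]
      congr 1
      push_cast
      ring_nf
      rw [Complex.I_sq]
      ring
    rw [← hh]
    ring
  rw [key] at h
  rcases mul_eq_zero.1 h with h' | h'
  · exact absurd h' (Complex.exp_ne_zero _)
  · exact h'


/-- If the entire extension `P(z) = Σ_j c_j e^{2πi y_j z}` of a trigonometric polynomial
(with `d ≥ 2`, strictly increasing real frequencies, nonzero coefficients) has a non-real
zero `z₀`, then there are `ε > 0` and `L > 0` such that every real interval of length `L`
contains a translate `s` with `P` vanishing in the disc `B(z₀ + s, ε)`: the set of such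
translates is syndetic in `ℝ`. -/
theorem stmt7 (d : ℕ) (hd : 2 ≤ d) (y : Fin d → ℝ) (hy : StrictMono y)
    (c : Fin d → ℂ) (hc : ∀ j, c j ≠ 0)
    (P : ℂ → ℂ) (hP : ∀ z, P z = ∑ j, c j * Complex.exp (2 * Real.pi * Complex.I * (y j) * z))
    (z₀ : ℂ) (hz₀im : z₀.im ≠ 0) (hz₀ : P z₀ = 0) :
    ∃ ε > (0 : ℝ), ∃ L > (0 : ℝ), ∀ t : ℝ,
      ∃ s ∈ Set.Icc t (t + L), ∃ z : ℂ, ‖z - (z₀ + s)‖ < ε ∧ P z = 0 := by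
  have hPfun : P = fun z => ∑ j, c j * Complex.exp (2 * Real.pi * Complex.I * (y j) * z) :=
    funext hP
  have Pd : Differentiable ℂ P := by
    rw [hPfun]
    apply Differentiable.fun_sum
    intro j _
    exact (differentiable_const _).mul
      (Complex.differentiable_exp.comp (differentiable_id.const_mul _))
  -- nontriviality
  have hnt : ∃ w : ℂ, P w ≠ 0 := by
    obtain ⟨w, hw⟩ := Pnontriv d hd y hy c hc
    exact ⟨w, by rw [hP]; exact hw⟩
  obtain ⟨w, hw⟩ := hnt
  -- isolated zero: get r > 0 with P ≠ 0 on punctured closed ball of radius 2r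
  have hiso : ∃ r > (0:ℝ), ∀ z ∈ Metric.sphere z₀ r, P z ≠ 0 := by
    rcases (Pd.analyticAt z₀).eventually_eq_zero_or_eventually_ne_zero with h | h
    · exfalso
      have hfreq : ∃ᶠ z in nhdsWithin z₀ {z₀}ᶜ, P z = 0 :=
        (h.filter_mono nhdsWithin_le_nhds).frequently
      have := AnalyticOnNhd.eqOn_zero_of_preconnected_of_frequently_eq_zero (fun z _ => Pd.analyticAt z)
        isPreconnected_univ (Set.mem_univ z₀) hfreq
      exact hw (this (Set.mem_univ w))
    · rw [eventually_nhdsWithin_iff] at h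
      rw [Metric.eventually_nhds_iff] at h
      obtain ⟨r0, hr0, hr⟩ := h
      refine ⟨r0 / 2, by linarith, fun z hz => ?_⟩
      rw [Metric.mem_sphere] at hz
      apply hr (by rw [hz]; linarith)
      intro hzz
      rw [Set.mem_singleton_iff] at hzz
      rw [hzz] at hz
      simp at hz
      linarith
  obtain ⟨r, hr, hsph⟩ := hiso
  -- minimum of ‖P‖ on the sphere
  obtain ⟨zm, hzm, hzmin⟩ := (isCompact_sphere z₀ r).exists_isMinOn
    (NormedSpace.sphere_nonempty.2 hr.le) (Pd.continuous.norm.continuousOn)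
  set m : ℝ := ‖P zm‖ with hm
  have hm0 : 0 < m := norm_pos_iff.2 (hsph zm hzm)
  -- constants
  set C : ℝ := ∑ j, ‖c j‖ * Real.exp (2 * Real.pi * |y j| * (‖z₀‖ + r)) with hC
  have hC0 : 0 ≤ C := Finset.sum_nonneg fun j _ => by positivity
  set δ : ℝ := m / (2 * (C + 1)) with hδdef
  have hδ : 0 < δ := div_pos hm0 (by linarith)
  have hCδ : C * δ < m / 2 := by
    have key : δ * (2 * (C + 1)) = m := by
      rw [hδdef]
      field_simp
    nlinarith [key, hδ]
  -- key uniform bound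
  have hbound : ∀ s : ℝ, (∀ j, ‖Complex.exp (2 * Real.pi * Complex.I * (y j) * (s:ℂ)) - 1‖ < δ) →
      ∀ z ∈ Metric.closedBall z₀ r, ‖P (z + s) - P z‖ ≤ C * δ := by
    intro s hs z hz
    have hznorm : ‖z‖ ≤ ‖z₀‖ + r := by
      have : ‖z - z₀‖ ≤ r := by rwa [Metric.mem_closedBall, dist_eq_norm] at hz
      calc ‖z‖ = ‖z₀ + (z - z₀)‖ := by ring_nf
        _ ≤ ‖z₀‖ + ‖z - z₀‖ := norm_add_le _ _
        _ ≤ ‖z₀‖ + r := by linarith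
    rw [hP (z + s), hP z, ← Finset.sum_sub_distrib]
    have heq : ∀ j : Fin d, c j * Complex.exp (2 * Real.pi * Complex.I * (y j) * (z + s))
        - c j * Complex.exp (2 * Real.pi * Complex.I * (y j) * z)
        = c j * Complex.exp (2 * Real.pi * Complex.I * (y j) * z)
          * (Complex.exp (2 * Real.pi * Complex.I * (y j) * (s:ℂ)) - 1) := by
      intro j
      have hh : Complex.exp (2 * Real.pi * Complex.I * (y j) * z)
          * Complex.exp (2 * Real.pi * Complex.I * (y j) * (s:ℂ))
          = Complex.exp (2 * Real.pi * Complex.I * (y j) * (z + s)) := by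
        rw [← Complex.exp_add]
        congr 1
        ring
      rw [← hh]
      ring
    calc ‖∑ j, (c j * Complex.exp (2 * Real.pi * Complex.I * (y j) * (z + s))
            - c j * Complex.exp (2 * Real.pi * Complex.I * (y j) * z))‖
        ≤ ∑ j, ‖c j * Complex.exp (2 * Real.pi * Complex.I * (y j) * z)
            * (Complex.exp (2 * Real.pi * Complex.I * (y j) * (s:ℂ)) - 1)‖ := by
          rw [Finset.sum_congr rfl (fun j _ => heq j)]
          exact norm_sum_le _ _
      _ ≤ ∑ j, ‖c j‖ * Real.exp (2 * Real.pi * |y j| * (‖z₀‖ + r)) * δ := by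
          apply Finset.sum_le_sum
          intro j _
          rw [norm_mul, norm_mul]
          have h1 : ‖Complex.exp (2 * Real.pi * Complex.I * (y j) * z)‖
              ≤ Real.exp (2 * Real.pi * |y j| * (‖z₀‖ + r)) := by
            rw [Complex.norm_exp]
            apply Real.exp_le_exp.2
            have hre : (2 * (Real.pi:ℂ) * Complex.I * (y j) * z).re
                = -(2 * Real.pi * (y j) * z.im) := by
              simp [Complex.mul_re, Complex.mul_im]
            rw [hre]
            have him : |z.im| ≤ ‖z‖ := Complex.abs_im_le_norm z
            have hpi := Real.pi_pos
            have hy1 : -(y j) ≤ |y j| := neg_le_abs _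
            have hy2 : (y j) ≤ |y j| := le_abs_self _
            have key : |y j| * |z.im| ≤ |y j| * (‖z₀‖ + r) :=
              mul_le_mul_of_nonneg_left (him.trans hznorm) (abs_nonneg _)
            have key2 : -(y j * z.im) ≤ |y j| * |z.im| := by
              rw [← abs_mul]
              exact neg_le_abs _
            have key3 := mul_le_mul_of_nonneg_left (key2.trans key)
              (by positivity : (0:ℝ) ≤ 2 * Real.pi)
            linarith
          have h2 : ‖Complex.exp (2 * Real.pi * Complex.I * (y j) * (s:ℂ)) - 1‖ ≤ δ := (hs j).le
          have := mul_le_mul h1 h2 (norm_nonneg _) (Real.exp_pos _).le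
          calc ‖c j‖ * ‖Complex.exp (2 * Real.pi * Complex.I * (y j) * z)‖
              * ‖Complex.exp (2 * Real.pi * Complex.I * (y j) * (s:ℂ)) - 1‖
              = ‖c j‖ * (‖Complex.exp (2 * Real.pi * Complex.I * (y j) * z)‖
                * ‖Complex.exp (2 * Real.pi * Complex.I * (y j) * (s:ℂ)) - 1‖) := by ring
            _ ≤ ‖c j‖ * (Real.exp (2 * Real.pi * |y j| * (‖z₀‖ + r)) * δ) :=
                mul_le_mul_of_nonneg_left this (norm_nonneg _)
            _ = ‖c j‖ * Real.exp (2 * Real.pi * |y j| * (‖z₀‖ + r)) * δ := by ring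
      _ = C * δ := by rw [hC, Finset.sum_mul]
  -- syndetic Bohr set
  obtain ⟨L, hL, hB⟩ := bohr d y hδ
  refine ⟨r + 1, by linarith, L, hL, fun t => ?_⟩
  obtain ⟨s, hsI, hs⟩ := hB t
  refine ⟨s, hsI, ?_⟩
  have hex : ∃ z ∈ Metric.closedBall z₀ r, P (z + s) = 0 := by
    by_contra H
    push_neg at H
    have Pd' : Differentiable ℂ (fun z : ℂ => P (z + (s:ℂ))) :=
      Pd.comp (differentiable_id.add_const _)
    set g : ℂ → ℂ := fun z => (P (z + (s:ℂ)))⁻¹ with hg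
    have hdc : DiffContOnCl ℂ g (Metric.ball z₀ r) := by
      constructor
      · intro z hz
        exact ((Pd'.differentiableAt).inv
          (H z (Metric.ball_subset_closedBall hz))).differentiableWithinAt
      · rw [closure_ball z₀ hr.ne']
        exact (Pd'.continuous.continuousOn).inv₀ H
    have hfr : ∀ z ∈ frontier (Metric.ball z₀ r), ‖g z‖ ≤ (m / 2)⁻¹ := by
      intro z hz
      rw [frontier_ball z₀ hr.ne'] at hz
      have h1 : m ≤ ‖P z‖ := hzmin hz
      have h2 : ‖P (z + s) - P z‖ ≤ C * δ :=
        hbound s hs z (Metric.sphere_subset_closedBall hz)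
      have h3 : m / 2 ≤ ‖P (z + s)‖ := by
        have := norm_sub_norm_le (P z) (P (z + s))
        rw [norm_sub_rev] at this
        linarith
      rw [hg]
      simp only [norm_inv]
      exact inv_anti₀ (by linarith) h3
    have hle := norm_le_of_forall_mem_frontier_norm_le Metric.isBounded_ball hdc hfr
      (z := z₀) (by rw [closure_ball z₀ hr.ne']; exact Metric.mem_closedBall_self hr.le)
    have hne := H z₀ (Metric.mem_closedBall_self hr.le)
    have hpos : 0 < ‖P (z₀ + s)‖ := norm_pos_iff.2 hne
    rw [hg] at hle
    simp only [norm_inv] at hle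
    have h4 : m / 2 ≤ ‖P (z₀ + s)‖ := by
      by_contra h4
      push_neg at h4
      have := inv_anti₀ hpos h4.le
      have h5 : (m/2)⁻¹ ≤ ‖P (z₀ + s)‖⁻¹ := inv_anti₀ hpos h4.le
      have hmm : 0 < (m/2)⁻¹ := by positivity
      have : ‖P (z₀ + s)‖⁻¹ = (m/2)⁻¹ := le_antisymm hle h5
      rw [inv_eq_iff_eq_inv, inv_inv] at this
      rw [this] at h4
      linarith
    have h5 : ‖P (z₀ + s) - P z₀‖ ≤ C * δ :=
      hbound s hs z₀ (Metric.mem_closedBall_self hr.le)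
    rw [hz₀, sub_zero] at h5
    linarith
  obtain ⟨z, hzb, hz0⟩ := hex
  refine ⟨z + s, ?_, hz0⟩
  have : z + (s:ℂ) - (z₀ + s) = z - z₀ := by ring
  rw [this]
  have : ‖z - z₀‖ ≤ r := by
    rw [← Complex.dist_eq]
    exact hzb
  linarith
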